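/- Hadamard's gamma function satisfies the recurrence H(z+1) = z·H(z) + 1/Γ(1−z) for all z ∈ ℂ where both sides are defined (with 1/Γ(1−z) interpreted as 0 at poles of Γ(1−z)). -/

import Mathlib

open Complex

noncomputable def digamma (z : ℂ) : ℂ := deriv Complex.Gamma z / Complex.Gamma z

noncomputable def H (z : ℂ) : ℂ :=
  Complex.Gamma z *
    (1 + Complex.sin (Real.pi * z) / (2 * Real.pi) * (_root_.digamma (z / 2) - _root_.digamma ((z + 1) / 2)))

lemma digamma_add_one (w : ℂ) (hw : ∀ m : ℕ, w ≠ -(m : ℂ)) :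
    _root_.digamma (w + 1) = _root_.digamma w + 1 / w := by
  have h0 : w ≠ 0 := by simpa using hw 0
  have hw1 : ∀ m : ℕ, w + 1 ≠ -(m : ℂ) := by
    intro m h
    apply hw (m + 1)
    push_cast
    linear_combination h
  have hd : DifferentiableAt ℂ Complex.Gamma w := Complex.differentiableAt_Gamma w hw
  have hd1 : DifferentiableAt ℂ Complex.Gamma (w + 1) := Complex.differentiableAt_Gamma _ hw1
  have hΓ : Complex.Gamma w ≠ 0 := Complex.Gamma_ne_zero hw
  have h1 : HasDerivAt (fun x => Complex.Gamma (x + 1)) (deriv Complex.Gamma (w + 1)) w := by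
    exact hd1.hasDerivAt.comp_add_const w 1
  have h2 : HasDerivAt (fun x : ℂ => x * Complex.Gamma x)
      (1 * Complex.Gamma w + w * deriv Complex.Gamma w) w :=
    (hasDerivAt_id w).mul hd.hasDerivAt
  have heq : (fun x : ℂ => Complex.Gamma (x + 1)) =ᶠ[nhds w] fun x => x * Complex.Gamma x := by
    filter_upwards [isOpen_ne.mem_nhds h0] with x hx
    exact Complex.Gamma_add_one x hx
  have h1' : HasDerivAt (fun x : ℂ => x * Complex.Gamma x)
      (deriv Complex.Gamma (w + 1)) w := h1.congr_of_eventuallyEq heq.symm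
  have hkey : deriv Complex.Gamma (w + 1) = Complex.Gamma w + w * deriv Complex.Gamma w := by
    have := h1'.unique h2
    linear_combination this
  unfold _root_.digamma
  rw [hkey, Complex.Gamma_add_one w h0]
  field_simp
  ring

theorem H_recurrence (z : ℂ) (hz : ∀ m : ℕ, z ≠ -(m : ℂ)) :
    H (z + 1) = z * H z + 1 / Complex.Gamma (1 - z) := by
  have hπ : (Real.pi : ℂ) ≠ 0 := by
    exact_mod_cast Real.pi_ne_zero
  have hz0 : z ≠ 0 := by simpa using hz 0
  -- reflection formula (valid also at poles, where both sides are 0)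
  have hrefl : 1 / Complex.Gamma (1 - z) =
      Complex.Gamma z * Complex.sin (Real.pi * z) / Real.pi := by
    by_cases hs : Complex.sin (Real.pi * z) = 0
    · obtain ⟨k, hk⟩ := Complex.sin_eq_zero_iff.mp hs
      have hzk : z = (k : ℂ) := by
        have : (Real.pi : ℂ) * z = (Real.pi : ℂ) * k := by rw [hk]; ring
        exact mul_left_cancel₀ hπ this
      have hk1 : 0 < k := by
        by_contra h
        push_neg at h
        apply hz (-k).toNat
        have hcast : (((-k).toNat : ℤ) : ℂ) = -(k : ℂ) := by
          rw [Int.toNat_of_nonneg (by omega : (0:ℤ) ≤ -k)]; push_cast; ring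
        rw [hzk]
        push_cast at hcast ⊢
        linear_combination hcast
      have hΓ0 : Complex.Gamma (1 - z) = 0 := by
        have hcast : (((k - 1).toNat : ℤ) : ℂ) = (k : ℂ) - 1 := by
          rw [Int.toNat_of_nonneg (by omega : (0:ℤ) ≤ k - 1)]; push_cast; ring
        have : 1 - z = -(((k - 1).toNat : ℕ) : ℂ) := by
          rw [hzk]
          push_cast at hcast ⊢
          linear_combination hcast
        rw [this]
        exact Complex.Gamma_neg_nat_eq_zero _
      rw [hΓ0, hs]
      simp
    · have h := Complex.Gamma_mul_Gamma_one_sub z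
      have hΓ1 : Complex.Gamma (1 - z) ≠ 0 := by
        intro h0
        rw [h0, mul_zero, eq_comm, div_eq_zero_iff] at h
        rcases h with h | h
        · exact hπ h
        · exact hs h
      have hs' : Complex.sin (z * Real.pi) ≠ 0 := by rwa [mul_comm]
      field_simp at h ⊢
      linear_combination -h
  have hw : ∀ m : ℕ, z / 2 ≠ -(m : ℂ) := by
    intro m h
    apply hz (2 * m)
    push_cast
    linear_combination 2 * h
  have hdig : _root_.digamma (z / 2 + 1) = _root_.digamma (z / 2) + 2 / z := by
    rw [digamma_add_one (z / 2) hw]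
    congr 1
    field_simp
  have hhalf : (z + 1 + 1) / 2 = z / 2 + 1 := by ring
  have hsin : Complex.sin (Real.pi * (z + 1)) = -Complex.sin (Real.pi * z) := by
    have : (Real.pi : ℂ) * (z + 1) = Real.pi * z + Real.pi := by ring
    rw [this, Complex.sin_add_pi]
  unfold H
  rw [hhalf, hdig, hsin, Complex.Gamma_add_one z hz0, hrefl]
  field_simp
  ring
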